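/- Semi-Lipschitz monotonicity of the Hamiltonian in the unknown: for all x, p ∈ ℝ^d, every symmetric d×d real matrix N, and all real numbers r₁ ≤ r₂, one has H(x, r₂, p, N) − H(x, r₁, p, N) ≤ γ̄·M·(r₂ − r₁). -/

import Mathlib

open scoped BigOperators
open Set Filter

noncomputable section

/-- Clamp a real number to the interval `[-1, 1]`. -/
def clamp (r : ℝ) : ℝ := max (-1) (min 1 r)

/-- Dot product on `Fin n → ℝ`. -/
def dotp {n : ℕ} (x y : Fin n → ℝ) : ℝ := ∑ i, x i * y i

/-- The clamped branching nonlinearity `G^a(x,r)`. -/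
def Gb {d : ℕ} {A : Type*} (γ : (Fin d → ℝ) → A → ℝ)
    (p : ℕ → (Fin d → ℝ) → A → ℝ) (x : Fin d → ℝ) (a : A) (r : ℝ) : ℝ :=
  γ x a * ((∑' k : ℕ, p k x a * (clamp r) ^ k) - clamp r)

/-- The Hamiltonian
`H(x,r,p,N) = inf_a { b·p + (1/2) tr(σσᵀ N) + G^a(x,r) - c(x,a) r }`. -/
def Ham {d m : ℕ} {A : Type*} (b : (Fin d → ℝ) → A → (Fin d → ℝ))
    (σ : (Fin d → ℝ) → A → (Fin d → Fin m → ℝ))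
    (γ : (Fin d → ℝ) → A → ℝ) (p : ℕ → (Fin d → ℝ) → A → ℝ)
    (c : (Fin d → ℝ) → A → ℝ)
    (x : Fin d → ℝ) (r : ℝ) (q : Fin d → ℝ) (N : Fin d → Fin d → ℝ) : ℝ :=
  ⨅ a : A, (dotp (b x a) q
      + (1 / 2) * (∑ i, ∑ j, (∑ l, σ x a i l * σ x a j l) * N j i)
      + Gb γ p x a r - c x a * r)

/-- A modulus of continuity: nondecreasing, nonnegative, tending to `0` at `0⁺`. -/
def IsModulus (ρ : ℝ → ℝ) : Prop :=
  (∀ s, 0 ≤ ρ s) ∧ Monotone ρ ∧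
    Filter.Tendsto ρ (nhdsWithin 0 (Set.Ioi 0)) (nhds 0)

/-- The continuous linear map `v ↦ dotp w v` on `Fin n → ℝ`. -/
def gradCLM {n : ℕ} (w : Fin n → ℝ) : (Fin n → ℝ) →L[ℝ] ℝ :=
  ∑ i, w i • (ContinuousLinearMap.proj i : (Fin n → ℝ) →L[ℝ] ℝ)

/-- Test function data: a candidate test function together with its time
derivative, spatial gradient and spatial Hessian. -/
structure TestData (d : ℕ) where
  φ : ℝ → (Fin d → ℝ) → ℝ
  φt : ℝ → (Fin d → ℝ) → ℝ
  Dφ : ℝ → (Fin d → ℝ) → (Fin d → ℝ)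
  D2φ : ℝ → (Fin d → ℝ) → (Fin d → Fin d → ℝ)

/-- `ψ` records a function which is `C¹` in time and `C²` in space, together with
its derivatives. -/
def IsC12 {d : ℕ} (ψ : TestData d) : Prop :=
  (∀ s y, HasDerivAt (fun τ => ψ.φ τ y) (ψ.φt s y) s) ∧
  (∀ s y, HasFDerivAt (fun z => ψ.φ s z) (gradCLM (ψ.Dφ s y)) y) ∧
  (∀ s y i, HasFDerivAt (fun z => ψ.Dφ s z i) (gradCLM (fun j => ψ.D2φ s y i j)) y) ∧
  Continuous (fun q : ℝ × (Fin d → ℝ) => ψ.φ q.1 q.2) ∧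
  Continuous (fun q : ℝ × (Fin d → ℝ) => ψ.φt q.1 q.2) ∧
  Continuous (fun q : ℝ × (Fin d → ℝ) => ψ.Dφ q.1 q.2) ∧
  Continuous (fun q : ℝ × (Fin d → ℝ) => ψ.D2φ q.1 q.2)

/-- Viscosity subsolution of `∂ₜ u + F(t, x, u, D_x u, D²_x u) = 0` on `[0,T) × ℝ^d`. -/
def IsViscSubsoln {d : ℕ} (T : ℝ)
    (F : ℝ → (Fin d → ℝ) → ℝ → (Fin d → ℝ) → (Fin d → Fin d → ℝ) → ℝ)
    (u : ℝ → (Fin d → ℝ) → ℝ) : Prop :=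
  ∀ t x, 0 ≤ t → t < T → ∀ ψ : TestData d, IsC12 ψ →
    IsLocalMaxOn (fun q : ℝ × (Fin d → ℝ) => u q.1 q.2 - ψ.φ q.1 q.2)
      (Set.Icc (0 : ℝ) T ×ˢ (Set.univ : Set (Fin d → ℝ))) (t, x) →
    u t x = ψ.φ t x →
    0 ≤ ψ.φt t x + F t x (u t x) (ψ.Dφ t x) (ψ.D2φ t x)

/-- Viscosity supersolution of `∂ₜ u + F(t, x, u, D_x u, D²_x u) = 0` on `[0,T) × ℝ^d`. -/
def IsViscSupersoln {d : ℕ} (T : ℝ)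
    (F : ℝ → (Fin d → ℝ) → ℝ → (Fin d → ℝ) → (Fin d → Fin d → ℝ) → ℝ)
    (u : ℝ → (Fin d → ℝ) → ℝ) : Prop :=
  ∀ t x, 0 ≤ t → t < T → ∀ ψ : TestData d, IsC12 ψ →
    IsLocalMinOn (fun q : ℝ × (Fin d → ℝ) => u q.1 q.2 - ψ.φ q.1 q.2)
      (Set.Icc (0 : ℝ) T ×ˢ (Set.univ : Set (Fin d → ℝ))) (t, x) →
    u t x = ψ.φ t x →
    ψ.φt t x + F t x (u t x) (ψ.Dφ t x) (ψ.D2φ t x) ≤ 0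

end

lemma clamp_mem (r : ℝ) : clamp r ∈ Set.Icc (-1 : ℝ) 1 := by
  constructor
  · exact le_max_left _ _
  · exact max_le (by norm_num) (min_le_left _ _)

lemma clamp_mono : Monotone clamp := fun a b h =>
  max_le_max le_rfl (min_le_min le_rfl h)

lemma clamp_lip {r₁ r₂ : ℝ} (h : r₁ ≤ r₂) : clamp r₂ - clamp r₁ ≤ r₂ - r₁ := by
  have h1 : |clamp r₂ - clamp r₁| ≤ |r₂ - r₁| := by
    unfold clamp
    calc |max (-1) (min 1 r₂) - max (-1) (min 1 r₁)|
        = |max (min 1 r₂) (-1) - max (min 1 r₁) (-1)| := by rw [max_comm (-1 : ℝ), max_comm (-1 : ℝ)]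
      _ ≤ |min 1 r₂ - min 1 r₁| := abs_max_sub_max_le_abs _ _ _
      _ ≤ |r₂ - r₁| := by
          refine (abs_min_sub_min_le_max 1 r₂ 1 r₁).trans ?_
          simp
  have h2 := (abs_le.1 h1).2
  calc clamp r₂ - clamp r₁ ≤ |clamp r₂ - clamp r₁| := le_abs_self _
    _ ≤ |r₂ - r₁| := h1
    _ = r₂ - r₁ := abs_of_nonneg (by linarith)

lemma pow_sub_pow_le_clamp {s₁ s₂ : ℝ} (h1 : -1 ≤ s₁) (h : s₁ ≤ s₂) (h2 : s₂ ≤ 1) (k : ℕ) :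
    s₂ ^ k - s₁ ^ k ≤ (k : ℝ) * (s₂ - s₁) := by
  have habs1 : |s₁| ≤ 1 := abs_le.2 ⟨h1, h.trans h2⟩
  have habs2 : |s₂| ≤ 1 := abs_le.2 ⟨h1.trans h, h2⟩
  have key := geom_sum₂_mul s₂ s₁ k
  rw [← key]
  have hb : (∑ i ∈ Finset.range k, s₂ ^ i * s₁ ^ (k - 1 - i)) ≤ (k : ℝ) := by
    calc (∑ i ∈ Finset.range k, s₂ ^ i * s₁ ^ (k - 1 - i))
        ≤ ∑ i ∈ Finset.range k, |s₂ ^ i * s₁ ^ (k - 1 - i)| :=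
          Finset.sum_le_sum fun i _ => le_abs_self _
      _ ≤ ∑ _i ∈ Finset.range k, (1 : ℝ) := by
          refine Finset.sum_le_sum fun i _ => ?_
          rw [abs_mul, abs_pow, abs_pow]
          exact mul_le_one₀ (pow_le_one₀ (abs_nonneg _) habs2)
            (pow_nonneg (abs_nonneg _) _) (pow_le_one₀ (abs_nonneg _) habs1)
      _ = (k : ℝ) := by simp
  exact mul_le_mul_of_nonneg_right hb (sub_nonneg.2 h)

/-- Semi-Lipschitz monotonicity of the Hamiltonian in the
unknown: for `r₁ ≤ r₂`, `H(x,r₂,p,N) − H(x,r₁,p,N) ≤ γ̄·M·(r₂ − r₁)`. -/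
theorem hamiltonian_semi_lipschitz
    (d m : ℕ) (hd : 0 < d) (hm : 0 < m)
    (A : Type) [Nonempty A]
    (γbar M : ℝ) (hγbar : 0 < γbar) (hM : 0 < M)
    (b : (Fin d → ℝ) → A → (Fin d → ℝ))
    (σ : (Fin d → ℝ) → A → (Fin d → Fin m → ℝ))
    (γ : (Fin d → ℝ) → A → ℝ)
    (p : ℕ → (Fin d → ℝ) → A → ℝ)
    (c : (Fin d → ℝ) → A → ℝ)
    (hb_bdd : ∃ C, ∀ x a, ‖b x a‖ ≤ C)
    (hσ_bdd : ∃ C, ∀ x a, ‖σ x a‖ ≤ C)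
    (hγ : ∀ x a, γ x a ∈ Set.Icc (0 : ℝ) γbar)
    (hp01 : ∀ k x a, p k x a ∈ Set.Icc (0 : ℝ) 1)
    (hpsum : ∀ x a, HasSum (fun k => p k x a) 1)
    (hpmean : ∀ x a, ∃ S, S ≤ M ∧ HasSum (fun k : ℕ => (k : ℝ) * p k x a) S)
    (hc0 : ∀ x a, 0 ≤ c x a) (hc_bdd : ∃ C, ∀ x a, c x a ≤ C)
    (x q : Fin d → ℝ) (N : Fin d → Fin d → ℝ) (hN : ∀ i j, N i j = N j i)
    (r₁ r₂ : ℝ) (hr : r₁ ≤ r₂) :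
    Ham b σ γ p c x r₂ q N - Ham b σ γ p c x r₁ q N ≤ γbar * M * (r₂ - r₁) := by
  classical
  obtain ⟨Cb, hCb⟩ := hb_bdd
  obtain ⟨Cσ, hCσ⟩ := hσ_bdd
  obtain ⟨Cc, hCc⟩ := hc_bdd
  have hrr : (0 : ℝ) ≤ r₂ - r₁ := sub_nonneg.2 hr
  set C : ℝ := γbar * M * (r₂ - r₁) with hCdef
  set F : ℝ → A → ℝ := fun r a => dotp (b x a) q
      + (1 / 2) * (∑ i, ∑ j, (∑ l, σ x a i l * σ x a j l) * N j i)
      + Gb γ p x a r - c x a * r with hF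
  have hHam : ∀ r, Ham b σ γ p c x r q N = ⨅ a, F r a := fun r => rfl
  -- summability of the clamped power series
  have hsummable : ∀ (a : A) (r : ℝ), Summable (fun k => p k x a * clamp r ^ k) := by
    intro a r
    refine Summable.of_norm_bounded (hpsum x a).summable fun k => ?_
    have h0 := (hp01 k x a).1
    have hcl := clamp_mem r
    have habs : |clamp r| ≤ 1 := abs_le.2 ⟨hcl.1, hcl.2⟩
    rw [Real.norm_eq_abs, abs_mul, abs_of_nonneg h0, abs_pow]
    calc p k x a * |clamp r| ^ k ≤ p k x a * 1 :=
          mul_le_mul_of_nonneg_left (pow_le_one₀ (abs_nonneg _) habs) h0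
      _ = p k x a := mul_one _
  -- the key Gb inequality
  have hGb : ∀ a : A, Gb γ p x a r₂ - Gb γ p x a r₁ ≤ C := by
    intro a
    obtain ⟨S, hSM, hS⟩ := hpmean x a
    have hs12 : clamp r₁ ≤ clamp r₂ := clamp_mono hr
    have hslip : clamp r₂ - clamp r₁ ≤ r₂ - r₁ := clamp_lip hr
    have hss : (0 : ℝ) ≤ clamp r₂ - clamp r₁ := sub_nonneg.2 hs12
    have hT : (∑' k, p k x a * clamp r₂ ^ k) - (∑' k, p k x a * clamp r₁ ^ k)
        ≤ M * (clamp r₂ - clamp r₁) := by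
      rw [← Summable.tsum_sub (hsummable a r₂) (hsummable a r₁)]
      have hRS : Summable (fun k : ℕ => ((k : ℝ) * p k x a) * (clamp r₂ - clamp r₁)) :=
        hS.summable.mul_right _
      calc (∑' (k : ℕ), (p k x a * clamp r₂ ^ k - p k x a * clamp r₁ ^ k))
          ≤ ∑' (k : ℕ), ((k : ℝ) * p k x a) * (clamp r₂ - clamp r₁) := by
            refine Summable.tsum_le_tsum (fun k => ?_)
              ((hsummable a r₂).sub (hsummable a r₁)) hRS
            have h0 := (hp01 k x a).1
            have hpow := pow_sub_pow_le_clamp (clamp_mem r₁).1 hs12 (clamp_mem r₂).2 k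
            calc p k x a * clamp r₂ ^ k - p k x a * clamp r₁ ^ k
                = p k x a * (clamp r₂ ^ k - clamp r₁ ^ k) := by ring
              _ ≤ p k x a * ((k : ℝ) * (clamp r₂ - clamp r₁)) :=
                  mul_le_mul_of_nonneg_left hpow h0
              _ = ((k : ℝ) * p k x a) * (clamp r₂ - clamp r₁) := by ring
        _ = S * (clamp r₂ - clamp r₁) := by rw [tsum_mul_right, hS.tsum_eq]
        _ ≤ M * (clamp r₂ - clamp r₁) := mul_le_mul_of_nonneg_right hSM hss
    have hγa := hγ x a
    have heq : Gb γ p x a r₂ - Gb γ p x a r₁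
        = γ x a * (((∑' k, p k x a * clamp r₂ ^ k) - (∑' k, p k x a * clamp r₁ ^ k))
            - (clamp r₂ - clamp r₁)) := by
      unfold Gb; ring
    rw [heq]
    calc γ x a * (((∑' k, p k x a * clamp r₂ ^ k) - (∑' k, p k x a * clamp r₁ ^ k))
            - (clamp r₂ - clamp r₁))
        ≤ γ x a * (M * (clamp r₂ - clamp r₁)) :=
          mul_le_mul_of_nonneg_left (by linarith) hγa.1
      _ ≤ γbar * (M * (clamp r₂ - clamp r₁)) :=
          mul_le_mul_of_nonneg_right hγa.2 (mul_nonneg hM.le hss)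
      _ ≤ γbar * (M * (r₂ - r₁)) :=
          mul_le_mul_of_nonneg_left (mul_le_mul_of_nonneg_left hslip hM.le) hγbar.le
      _ = C := by rw [hCdef]; ring
  -- per-control inequality
  have hFa : ∀ a : A, F r₂ a ≤ F r₁ a + C := by
    intro a
    have h1 := hGb a
    have h2 : c x a * r₁ ≤ c x a * r₂ := mul_le_mul_of_nonneg_left hr (hc0 x a)
    simp only [hF]
    linarith
  -- bounds for BddBelow
  have hCσ0 : 0 ≤ Cσ := le_trans (norm_nonneg _) (hCσ x (Classical.arbitrary A))
  have hCc0 : 0 ≤ Cc := le_trans (hc0 x (Classical.arbitrary A)) (hCc x (Classical.arbitrary A))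
  set Kb : ℝ := Cb * ∑ i, |q i| with hKb
  set Kσ : ℝ := ∑ i : Fin d, ∑ j : Fin d, ((m : ℝ) * Cσ ^ 2) * |N j i| with hKσ
  have hdot : ∀ a : A, -Kb ≤ dotp (b x a) q := by
    intro a
    have habs : |dotp (b x a) q| ≤ Kb := by
      unfold dotp
      calc |∑ i, b x a i * q i| ≤ ∑ i, |b x a i * q i| := Finset.abs_sum_le_sum_abs _ _
        _ ≤ ∑ i, Cb * |q i| := by
            refine Finset.sum_le_sum fun i _ => ?_
            rw [abs_mul]
            exact mul_le_mul_of_nonneg_right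
              (le_trans (norm_le_pi_norm (b x a) i) (hCb x a)) (abs_nonneg _)
        _ = Kb := by rw [hKb, Finset.mul_sum]
    linarith [neg_abs_le (dotp (b x a) q)]
  have hσt : ∀ a : A, -Kσ ≤ ∑ i, ∑ j, (∑ l, σ x a i l * σ x a j l) * N j i := by
    intro a
    have hσb : ∀ i l, |σ x a i l| ≤ Cσ := fun i l =>
      le_trans (le_trans (norm_le_pi_norm (σ x a i) l) (norm_le_pi_norm (σ x a) i)) (hCσ x a)
    have habs : |∑ i, ∑ j, (∑ l, σ x a i l * σ x a j l) * N j i| ≤ Kσ := by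
      calc |∑ i, ∑ j, (∑ l, σ x a i l * σ x a j l) * N j i|
          ≤ ∑ i, |∑ j, (∑ l, σ x a i l * σ x a j l) * N j i| := Finset.abs_sum_le_sum_abs _ _
        _ ≤ ∑ i : Fin d, ∑ j : Fin d, ((m : ℝ) * Cσ ^ 2) * |N j i| := by
            refine Finset.sum_le_sum fun i _ => ?_
            calc |∑ j, (∑ l, σ x a i l * σ x a j l) * N j i|
                ≤ ∑ j, |(∑ l, σ x a i l * σ x a j l) * N j i| := Finset.abs_sum_le_sum_abs _ _
              _ ≤ ∑ j : Fin d, ((m : ℝ) * Cσ ^ 2) * |N j i| := by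
                  refine Finset.sum_le_sum fun j _ => ?_
                  rw [abs_mul]
                  refine mul_le_mul_of_nonneg_right ?_ (abs_nonneg _)
                  calc |∑ l, σ x a i l * σ x a j l| ≤ ∑ l, |σ x a i l * σ x a j l| :=
                        Finset.abs_sum_le_sum_abs _ _
                    _ ≤ ∑ _l : Fin m, Cσ * Cσ := by
                        refine Finset.sum_le_sum fun l _ => ?_
                        rw [abs_mul]
                        exact mul_le_mul (hσb i l) (hσb j l) (abs_nonneg _) hCσ0
                    _ = (m : ℝ) * Cσ ^ 2 := by
                        rw [Finset.sum_const, Finset.card_univ, Fintype.card_fin]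
                        ring
        _ = Kσ := hKσ.symm
    linarith [neg_abs_le (∑ i, ∑ j, (∑ l, σ x a i l * σ x a j l) * N j i)]
  have hGbbd : ∀ a : A, -(2 * γbar) ≤ Gb γ p x a r₂ := by
    intro a
    have hcl := clamp_mem r₂
    have habss : |clamp r₂| ≤ 1 := abs_le.2 ⟨hcl.1, hcl.2⟩
    have hnsum : Summable (fun k => ‖p k x a * clamp r₂ ^ k‖) := by
      refine Summable.of_nonneg_of_le (fun k => norm_nonneg _) (fun k => ?_) (hpsum x a).summable
      have h0 := (hp01 k x a).1
      rw [Real.norm_eq_abs, abs_mul, abs_of_nonneg h0, abs_pow]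
      calc p k x a * |clamp r₂| ^ k ≤ p k x a * 1 :=
            mul_le_mul_of_nonneg_left (pow_le_one₀ (abs_nonneg _) habss) h0
        _ = p k x a := mul_one _
    have hTabs : |∑' k, p k x a * clamp r₂ ^ k| ≤ 1 := by
      calc |∑' k, p k x a * clamp r₂ ^ k| = ‖∑' k, p k x a * clamp r₂ ^ k‖ := rfl
        _ ≤ ∑' k, ‖p k x a * clamp r₂ ^ k‖ := norm_tsum_le_tsum_norm hnsum
        _ ≤ ∑' k, p k x a := by
            refine Summable.tsum_le_tsum (fun k => ?_) hnsum (hpsum x a).summable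
            have h0 := (hp01 k x a).1
            rw [Real.norm_eq_abs, abs_mul, abs_of_nonneg h0, abs_pow]
            calc p k x a * |clamp r₂| ^ k ≤ p k x a * 1 :=
                  mul_le_mul_of_nonneg_left (pow_le_one₀ (abs_nonneg _) habss) h0
              _ = p k x a := mul_one _
        _ = 1 := (hpsum x a).tsum_eq
    have hγa := hγ x a
    have habsG : |Gb γ p x a r₂| ≤ 2 * γbar := by
      unfold Gb
      rw [abs_mul, abs_of_nonneg hγa.1]
      have h2 : |(∑' k, p k x a * clamp r₂ ^ k) - clamp r₂| ≤ 2 := by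
        calc |(∑' k, p k x a * clamp r₂ ^ k) - clamp r₂|
            ≤ |∑' k, p k x a * clamp r₂ ^ k| + |clamp r₂| := abs_sub _ _
          _ ≤ 1 + 1 := add_le_add hTabs habss
          _ = 2 := by norm_num
      calc γ x a * |(∑' k, p k x a * clamp r₂ ^ k) - clamp r₂|
          ≤ γbar * 2 := mul_le_mul hγa.2 h2 (abs_nonneg _) hγbar.le
        _ = 2 * γbar := by ring
    linarith [neg_abs_le (Gb γ p x a r₂)]
  have hcr : ∀ a : A, -(Cc * |r₂|) ≤ -(c x a * r₂) := by
    intro a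
    have : c x a * r₂ ≤ Cc * |r₂| :=
      le_trans (mul_le_mul_of_nonneg_left (le_abs_self r₂) (hc0 x a))
        (mul_le_mul_of_nonneg_right (hCc x a) (abs_nonneg _))
    linarith
  set L : ℝ := -Kb + (1 / 2) * (-Kσ) + (-(2 * γbar)) + (-(Cc * |r₂|)) with hL
  have hbdd : BddBelow (Set.range (F r₂)) := by
    refine ⟨L, ?_⟩
    rintro y ⟨a, rfl⟩
    have h1 := hdot a
    have h2 := hσt a
    have h3 := hGbbd a
    have h4 := hcr a
    simp only [hF, hL]
    linarith
  have h1 : ∀ a : A, (⨅ a', F r₂ a') ≤ F r₁ a + C := fun a =>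
    le_trans (ciInf_le hbdd a) (hFa a)
  have h2 : (⨅ a', F r₂ a') - C ≤ ⨅ a, F r₁ a :=
    le_ciInf fun a => by linarith [h1 a]
  rw [hHam r₂, hHam r₁]
  linarith
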